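/- Let C ⊆ F₄ⁿ be an even linear code (every codeword has even Hamming weight). Then C is self-orthogonal with respect to the inner product a∗b = Σ_{i=1}^{n} (a_i b_i² + a_i² b_i); that is, for all a, b ∈ C one has Σ_{i=1}^{n} (a_i b_i² + a_i² b_i) = 0 in F₄. -/
import Mathlib


local notation "F₄" => GaloisField 2 2

/-- Hamming weight: the number of nonzero coordinates. -/
noncomputable def wt {n : ℕ} (v : Fin n → F₄) : ℕ := Set.ncard {i | v i ≠ 0}

noncomputable instance : Fintype F₄ := Fintype.ofFinite _

lemma F4_card : Fintype.card F₄ = 4 := by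
  have := GaloisField.card 2 2 (by norm_num)
  rwa [Nat.card_eq_fintype_card] at this

lemma two_eq_zero : (2 : F₄) = 0 := by
  have := CharP.cast_eq_zero F₄ 2
  exact_mod_cast this

lemma cube_sum_eq_zero {n : ℕ} (v : Fin n → F₄) (h : Even (wt v)) :
    ∑ i, (v i) ^ 3 = 0 := by
  classical
  have hcube : ∀ i, (v i) ^ 3 = if v i ≠ 0 then 1 else 0 := by
    intro i
    by_cases hv : v i = 0
    · simp [hv]
    · simp only [hv, if_pos, ne_eq, not_false_iff, if_true]
      have := FiniteField.pow_card_sub_one_eq_one (v i) hv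
      rwa [F4_card] at this
  rw [Finset.sum_congr rfl (fun i _ => hcube i), Finset.sum_boole]
  have hwt : wt v = (Finset.univ.filter (fun i => v i ≠ 0)).card := by
    simp [wt, Set.ncard_eq_toFinset_card', Set.toFinset_setOf]
  rw [hwt] at h
  obtain ⟨k, hk⟩ := h
  rw [hk]
  push_cast
  have : (k : F₄) + k = 2 * k := by ring
  rw [this, two_eq_zero, zero_mul]

theorem even_code_self_orthogonal (n : ℕ)
    (C : Submodule F₄ (Fin n → F₄))
    (heven : ∀ v ∈ C, Even (wt v)) :
    ∀ a ∈ C, ∀ b ∈ C, ∑ i, (a i * (b i) ^ 2 + (a i) ^ 2 * b i) = 0 := by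
  intro a ha b hb
  have hab : a + b ∈ C := C.add_mem ha hb
  have h1 := cube_sum_eq_zero a (heven a ha)
  have h2 := cube_sum_eq_zero b (heven b hb)
  have h3 := cube_sum_eq_zero (a + b) (heven _ hab)
  have key : ∀ i, a i * (b i) ^ 2 + (a i) ^ 2 * b i
      = ((a + b) i) ^ 3 + (a i) ^ 3 + (b i) ^ 3 := by
    intro i
    simp only [Pi.add_apply]
    linear_combination (-(a i ^ 3 + b i ^ 3 + a i ^ 2 * b i + a i * b i ^ 2)) * two_eq_zero
  calc ∑ i, (a i * (b i) ^ 2 + (a i) ^ 2 * b i)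
      = ∑ i, (((a + b) i) ^ 3 + (a i) ^ 3 + (b i) ^ 3) :=
        Finset.sum_congr rfl (fun i _ => key i)
    _ = (∑ i, ((a + b) i) ^ 3) + (∑ i, (a i) ^ 3) + (∑ i, (b i) ^ 3) := by
        rw [← Finset.sum_add_distrib, ← Finset.sum_add_distrib]
    _ = 0 := by rw [h1, h2, h3]; ring
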